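/- arXiv:0807.0240 — 2 statements merged into one kernel-verified Lean document; each statement's English description precedes it below -/
import Mathlib

section
/- Let q be a prime power and d ≥ 1. There exists a character χ of 𝔽_{q^{2d}}^× that is regular (i.e., its 2d Galois conjugates χ, χ^q, ..., χ^{q^{2d-1}} over 𝔽_q are pairwise distinct) and satisfies χ^{q^d} = χ^{-1} (i.e., χ is conjugate-selfdual with respect to the extension 𝔽_{q^{2d}}/𝔽_{q^d}). -/
/-- for a prime power q and d ≥ 1, there is a regular character χ of the
units of a field with q^{2d} elements (its 2d Frobenius conjugates χ^{q^i} are pairwise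
distinct) which is conjugate-selfdual: χ^{q^d} = χ⁻¹. -/
theorem stmt8 (p n d : ℕ) (hp : p.Prime) (hn : 0 < n) (hd : 1 ≤ d)
    (q : ℕ) (hq : q = p ^ n)
    (K : Type*) [Field K] [Fintype K] (hK : Fintype.card K = q ^ (2 * d)) :
    ∃ χ : Kˣ →* ℂˣ,
      (∀ i j : ℕ, i < j → j < 2 * d →
        χ.comp (powMonoidHom (q ^ i)) ≠ χ.comp (powMonoidHom (q ^ j))) ∧
      χ.comp (powMonoidHom (q ^ d)) = χ⁻¹ := by
  have hq2 : 2 ≤ q := by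
    subst hq
    exact le_trans hp.two_le (Nat.le_self_pow hn.ne' p)
  set N : ℕ := q ^ (2 * d) - 1 with hN
  have hQ2 : 2 ≤ q ^ d := le_trans hq2 (Nat.le_self_pow (by omega) q)
  have hq2d : q ^ (2 * d) = q ^ d * q ^ d := by rw [two_mul, pow_add]
  have hN3 : 3 ≤ N := by
    have : 4 ≤ q ^ (2 * d) := by rw [hq2d]; nlinarith
    omega
  have : NeZero N := ⟨by omega⟩
  have hcardU : Nat.card Kˣ = N := by
    classical
    rw [Nat.card_eq_fintype_card, Fintype.card_units, hK]
  have hcardR : Nat.card Kˣ = Nat.card (rootsOfUnity N ℂ) := by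
    rw [hcardU, Complex.card_rootsOfUnity]
  -- injective character χ₀
  set χ₀ : Kˣ →* ℂˣ :=
    ((rootsOfUnity N ℂ).subtype).comp (mulEquivOfCyclicCardEq hcardR).toMonoidHom with hχ₀
  have hinj : Function.Injective χ₀ := by
    exact ((rootsOfUnity N ℂ).subtype_injective).comp (mulEquivOfCyclicCardEq hcardR).injective
  set e : ℕ := q ^ d - 1 with he
  refine ⟨χ₀.comp (powMonoidHom e), ?_, ?_⟩
  · rintro i j hij hj hEq
    obtain ⟨g, hg⟩ := IsCyclic.exists_ofOrder_eq_natCard (α := Kˣ)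
    have hg' : orderOf g = N := by rw [hg, hcardU]
    have := DFunLike.congr_fun hEq g
    simp only [MonoidHom.comp_apply, powMonoidHom_apply, ← pow_mul] at this
    have hgp : g ^ (q ^ i * e) = g ^ (q ^ j * e) := hinj this
    have hmod : q ^ i * e ≡ q ^ j * e [MOD N] := by
      rwa [pow_eq_pow_iff_modEq, hg'] at hgp
    have hdvd : (N : ℤ) ∣ (q ^ j * e : ℕ) - (q ^ i * e : ℕ) := hmod.dvd
    -- pass to ℤ
    set Q : ℤ := (q : ℤ) ^ d with hQ
    have hQ2' : 2 ≤ Q := by rw [hQ]; exact_mod_cast hQ2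
    have heZ : (e : ℤ) = Q - 1 := by
      rw [he, Nat.cast_sub (by omega : 1 ≤ q ^ d), hQ]; push_cast; ring
    have hNZ : (N : ℤ) = (Q - 1) * (Q + 1) := by
      have h1 : 1 ≤ q ^ (2 * d) := Nat.one_le_pow _ _ (by omega)
      rw [hN, Nat.cast_sub h1, hQ]
      push_cast
      rw [two_mul, pow_add]; ring
    have hdvd2 : (Q + 1) ∣ (q : ℤ) ^ i * ((q : ℤ) ^ (j - i) - 1) := by
      have h1 : (Q - 1) * (Q + 1) ∣ ((q : ℤ) ^ i * ((q : ℤ) ^ (j - i) - 1)) * (Q - 1) := by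
        rw [← hNZ]
        convert hdvd using 1
        push_cast
        have hji : (q : ℤ) ^ i * (q : ℤ) ^ (j - i) = (q : ℤ) ^ j := by
          rw [← pow_add]; congr 1; omega
        rw [heZ]
        linear_combination (Q - 1) * hji
      have hQ1 : Q - 1 ≠ 0 := by omega
      rcases h1 with ⟨c, hc⟩
      exact ⟨c, by
        have := hc
        rw [mul_comm (Q - 1) (Q + 1), mul_assoc] at this
        exact mul_left_cancel₀ hQ1 (by linarith [this])⟩
    have hcop : IsCoprime (Q + 1) ((q : ℤ) ^ i) := by
      apply IsCoprime.pow_right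
      have : IsCoprime (Q + 1) (q : ℤ) := by
        refine ⟨1, -(q : ℤ) ^ (d - 1), ?_⟩
        rw [hQ]
        have : (q : ℤ) ^ (d - 1) * (q : ℤ) = (q : ℤ) ^ d := by
          rw [← pow_succ]; congr 1; omega
        linarith [this]
      exact this
    have hdvd3 : (Q + 1) ∣ (q : ℤ) ^ (j - i) - 1 := (hcop.dvd_of_dvd_mul_left hdvd2)
    set k : ℕ := j - i with hk
    have hk1 : 1 ≤ k := by omega
    have hk2 : k ≤ 2 * d - 1 := by omega
    by_cases hkd : k ≤ d
    · have hlt : (q : ℤ) ^ k - 1 < Q + 1 := by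
        have : (q : ℤ) ^ k ≤ Q := by
          rw [hQ]; exact pow_le_pow_right₀ (by exact_mod_cast hq2.trans' one_le_two) hkd
        omega
      have hpos : 0 < (q : ℤ) ^ k - 1 := by
        have h2k : (2 : ℤ) ≤ (q : ℤ) ^ k :=
          le_trans (by exact_mod_cast hq2)
            (le_self_pow₀ (by exact_mod_cast hq2.trans' one_le_two) (by omega))
        omega
      have := Int.le_of_dvd hpos hdvd3
      omega
    · push_neg at hkd
      have hdvd4 : (Q + 1) ∣ (q : ℤ) ^ k + (q : ℤ) ^ (k - d) := by
        refine ⟨(q : ℤ) ^ (k - d), ?_⟩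
        have : (q : ℤ) ^ (k - d) * (q : ℤ) ^ d = (q : ℤ) ^ k := by
          rw [← pow_add]; congr 1; omega
        rw [hQ]; linarith [this]
      have hdvd5 : (Q + 1) ∣ (q : ℤ) ^ (k - d) + 1 := by
        have := dvd_sub hdvd4 hdvd3
        simpa [sub_sub_cancel, add_sub_sub_cancel] using this
      have hlt : (q : ℤ) ^ (k - d) + 1 < Q + 1 := by
        have : (q : ℤ) ^ (k - d) < Q := by
          rw [hQ]
          exact pow_lt_pow_right₀ (by exact_mod_cast hq2) (by omega)
        omega
      have hpos : 0 < (q : ℤ) ^ (k - d) + 1 := by positivity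
      have := Int.le_of_dvd hpos hdvd5
      omega
  · refine MonoidHom.ext fun x => ?_
    simp only [MonoidHom.comp_apply, powMonoidHom_apply, MonoidHom.inv_apply, ← pow_mul]
    rw [eq_inv_iff_mul_eq_one, ← map_mul, ← pow_add]
    have heq : q ^ d * e + e = N := by
      rw [he, hN, hq2d]
      have h1 : 1 ≤ q ^ d := by omega
      have h2 : 1 ≤ q ^ d * q ^ d := Nat.one_le_iff_ne_zero.mpr (by positivity)
      zify [h1, h2]
      ring
    rw [heq]
    have : x ^ N = 1 := by
      rw [← hcardU]
      exact pow_card_eq_one'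
    rw [this, map_one]
end

section
/- Let G be a finite group with an irreducible selfdual representation π, and suppose π has some subgroup K ≤ G such that the restriction of π to K contains an irreducible selfdual representation τ of K with multiplicity one. Then π is orthogonal if and only if τ is orthogonal, and π is symplectic if and only if τ is symplectic. -/
open Module LinearMap

/-- A representation is irreducible: the space is nonzero and the only invariant
submodules are trivial. -/
def RepIrreducible {G V : Type*} [Group G] [AddCommGroup V] [Module ℂ V]
    (ρ : Representation ℂ G V) : Prop :=
  (∃ v : V, v ≠ 0) ∧
    ∀ U : Submodule ℂ V, (∀ (g : G), ∀ v ∈ U, ρ g v ∈ U) → U = ⊥ ∨ U = ⊤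

/-- A representation is selfdual: it is equivariantly isomorphic to its contragredient. -/
def RepSelfdual {G V : Type*} [Group G] [AddCommGroup V] [Module ℂ V]
    (ρ : Representation ℂ G V) : Prop :=
  ∃ e : V ≃ₗ[ℂ] Module.Dual ℂ V, ∀ g v, e (ρ g v) = ρ.dual g (e v)

/-- A bilinear form is invariant under a representation. -/
def InvariantBilin {G V : Type*} [Group G] [AddCommGroup V] [Module ℂ V]
    (ρ : Representation ℂ G V) (B : LinearMap.BilinForm ℂ V) : Prop :=
  ∀ (g : G) (v w : V), B (ρ g v) (ρ g w) = B v w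

section Helpers

variable {G V : Type*} [Group G] [AddCommGroup V] [Module ℂ V]

/-- Schur's lemma: an equivariant endomorphism of an irreducible rep is scalar. -/
theorem schur_scalar [FiniteDimensional ℂ V] (ρ : Representation ℂ G V)
    (hirr : RepIrreducible ρ)
    (f : V →ₗ[ℂ] V) (hf : ∀ g v, f (ρ g v) = ρ g (f v)) :
    ∃ c : ℂ, f = c • (LinearMap.id : V →ₗ[ℂ] V) := by
  obtain ⟨v₀, hv₀⟩ := hirr.1
  haveI : Nontrivial V := ⟨v₀, 0, hv₀⟩
  obtain ⟨c, hc⟩ := Module.End.exists_eigenvalue (f : Module.End ℂ V)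
  refine ⟨c, ?_⟩
  set U : Submodule ℂ V := LinearMap.ker (f - c • LinearMap.id) with hU
  have hinv : ∀ (g : G), ∀ v ∈ U, ρ g v ∈ U := by
    intro g v hv
    simp only [hU, LinearMap.mem_ker, LinearMap.sub_apply, LinearMap.smul_apply,
      LinearMap.id_apply] at hv ⊢
    rw [hf, ← map_smul, ← map_sub, hv, map_zero]
  rcases hirr.2 U hinv with h | h
  · exfalso
    obtain ⟨w, hw0, hw⟩ := hc.exists_hasEigenvector
    have hfw : f w = c • w := Module.End.mem_eigenspace_iff.mp hw0
    have : w ∈ U := by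
      simp [hU, LinearMap.mem_ker, LinearMap.sub_apply, hfw]
    rw [h] at this
    exact hw (by simpa using this)
  · ext v
    have : v ∈ U := h ▸ Submodule.mem_top
    simp only [hU, LinearMap.mem_ker, LinearMap.sub_apply, LinearMap.smul_apply,
      LinearMap.id_apply, sub_eq_zero] at this
    simpa using this

/-- A nonzero invariant bilinear form on an irreducible rep is nondegenerate on the left. -/
theorem nondeg_left (ρ : Representation ℂ G V) (hirr : RepIrreducible ρ)
    (B : LinearMap.BilinForm ℂ V) (hB : B ≠ 0) (hinv : InvariantBilin ρ B) :
    ∀ v : V, (∀ w : V, B v w = 0) → v = 0 := by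
  intro v hv
  set U : Submodule ℂ V := LinearMap.ker B with hU
  have hUinv : ∀ (g : G), ∀ u ∈ U, ρ g u ∈ U := by
    intro g u hu
    simp only [hU, LinearMap.mem_ker] at hu ⊢
    ext w
    have : ρ g (ρ g⁻¹ w) = w := by
      rw [← Module.End.mul_apply, ← map_mul, mul_inv_cancel, map_one, Module.End.one_apply]
    calc B (ρ g u) w = B (ρ g u) (ρ g (ρ g⁻¹ w)) := by rw [this]
      _ = B u (ρ g⁻¹ w) := hinv g u (ρ g⁻¹ w)
      _ = 0 := by rw [hu]; rfl
  rcases hirr.2 U hUinv with h | h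
  · have : v ∈ U := by
      simp only [hU, LinearMap.mem_ker]
      ext w
      exact hv w
    rw [h, Submodule.mem_bot] at this
    exact this
  · exfalso
    apply hB
    ext u w
    have : u ∈ U := h ▸ Submodule.mem_top
    simp only [hU, LinearMap.mem_ker] at this
    rw [this]
    rfl

/-- A nonzero invariant bilinear form on an irreducible rep is nondegenerate on the right. -/
theorem nondeg_right (ρ : Representation ℂ G V) (hirr : RepIrreducible ρ)
    (B : LinearMap.BilinForm ℂ V) (hB : B ≠ 0) (hinv : InvariantBilin ρ B) :
    ∀ w : V, (∀ v : V, B v w = 0) → w = 0 := by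
  have hflipne : (B.flip : LinearMap.BilinForm ℂ V) ≠ 0 := by
    intro h
    apply hB
    ext v w
    have := LinearMap.congr_fun (LinearMap.congr_fun h w) v
    simpa [LinearMap.flip_apply] using this
  have hflipinv : InvariantBilin ρ B.flip := by
    intro g v w
    simpa [LinearMap.flip_apply] using hinv g w v
  intro w hw
  exact nondeg_left ρ hirr B.flip hflipne hflipinv w (fun v => by
    simpa [LinearMap.flip_apply] using hw v)

/-- Any invariant bilinear form carries `B (ρ g v) = ρ.dual g (B v)`. -/
theorem form_equivariant (ρ : Representation ℂ G V)
    (B : LinearMap.BilinForm ℂ V) (hinv : InvariantBilin ρ B) (g : G) (v : V) :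
    B (ρ g v) = ρ.dual g (B v) := by
  ext w
  have hgw : ρ g (ρ g⁻¹ w) = w := by
    rw [← Module.End.mul_apply, ← map_mul, mul_inv_cancel, map_one, Module.End.one_apply]
  calc B (ρ g v) w = B (ρ g v) (ρ g (ρ g⁻¹ w)) := by rw [hgw]
    _ = B v (ρ g⁻¹ w) := hinv g v (ρ g⁻¹ w)
    _ = (ρ.dual g (B v)) w := rfl

/-- Uniqueness up to scalar of invariant bilinear forms on an irreducible rep. -/
theorem unique_form [FiniteDimensional ℂ V] (ρ : Representation ℂ G V)
    (hirr : RepIrreducible ρ) (B₁ B₂ : LinearMap.BilinForm ℂ V) (h1 : B₁ ≠ 0)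
    (hi1 : InvariantBilin ρ B₁) (hi2 : InvariantBilin ρ B₂) :
    ∃ c : ℂ, B₂ = c • B₁ := by
  have hinj : Function.Injective (B₁ : V →ₗ[ℂ] Module.Dual ℂ V) := by
    rw [← LinearMap.ker_eq_bot]
    rw [Submodule.eq_bot_iff]
    intro v hv
    simp only [LinearMap.mem_ker] at hv
    exact nondeg_left ρ hirr B₁ h1 hi1 v (fun w => by rw [hv]; rfl)
  have hsurj : Function.Surjective (B₁ : V →ₗ[ℂ] Module.Dual ℂ V) :=
    (LinearMap.injective_iff_surjective_of_finrank_eq_finrank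
      (Subspace.dual_finrank_eq (K := ℂ) (V := V)).symm).mp hinj
  let eq1 : V ≃ₗ[ℂ] Module.Dual ℂ V := LinearEquiv.ofBijective B₁ ⟨hinj, hsurj⟩
  have heq1 : ∀ v : V, eq1 v = B₁ v := fun v => rfl
  let f : V →ₗ[ℂ] V := (eq1.symm : Module.Dual ℂ V →ₗ[ℂ] V) ∘ₗ (B₂ : V →ₗ[ℂ] Module.Dual ℂ V)
  have hfeq : ∀ g v, f (ρ g v) = ρ g (f v) := by
    intro g v
    apply eq1.injective
    show eq1 (eq1.symm (B₂ (ρ g v))) = eq1 (ρ g (eq1.symm (B₂ v)))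
    rw [eq1.apply_symm_apply]
    rw [form_equivariant ρ B₂ hi2 g v]
    rw [heq1, form_equivariant ρ B₁ hi1 g]
    rw [← heq1, eq1.apply_symm_apply]
  obtain ⟨c, hc⟩ := schur_scalar ρ hirr f hfeq
  refine ⟨c, ?_⟩
  ext v w
  have h1v : B₂ v = eq1 (f v) := by
    show B₂ v = eq1 (eq1.symm (B₂ v))
    rw [eq1.apply_symm_apply]
  have : f v = c • v := by rw [hc]; rfl
  rw [LinearMap.smul_apply, LinearMap.smul_apply]
  calc B₂ v w = (eq1 (f v)) w := by rw [← h1v]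
    _ = (eq1 (c • v)) w := by rw [this]
    _ = c • (B₁ v) w := by rw [heq1]; simp
    _ = c • B₁ v w := rfl

/-- An irreducible selfdual rep carries a nonzero invariant form that is symmetric
or antisymmetric. -/
theorem exists_sign_form [FiniteDimensional ℂ V] (ρ : Representation ℂ G V)
    (hirr : RepIrreducible ρ) (hsd : RepSelfdual ρ) :
    ∃ B : LinearMap.BilinForm ℂ V, B ≠ 0 ∧ InvariantBilin ρ B ∧
      ((∀ v w, B v w = B w v) ∨ (∀ v w, B v w = - B w v)) := by
  obtain ⟨e, he⟩ := hsd
  set B : LinearMap.BilinForm ℂ V := (e : V →ₗ[ℂ] Module.Dual ℂ V) with hBdef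
  have hBapp : ∀ v w : V, B v w = e v w := fun v w => rfl
  obtain ⟨v₀, hv₀⟩ := hirr.1
  have hBne : B ≠ 0 := by
    intro h
    apply hv₀
    apply e.injective
    rw [map_zero]
    ext w
    have := LinearMap.congr_fun (LinearMap.congr_fun h v₀) w
    simpa [hBapp] using this
  have hBinv : InvariantBilin ρ B := by
    intro g v w
    have hgw : ρ g⁻¹ (ρ g w) = w := by
      rw [← Module.End.mul_apply, ← map_mul, inv_mul_cancel, map_one, Module.End.one_apply]
    calc B (ρ g v) (ρ g w) = e (ρ g v) (ρ g w) := rfl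
      _ = (ρ.dual g (e v)) (ρ g w) := by rw [he]
      _ = e v (ρ g⁻¹ (ρ g w)) := rfl
      _ = e v w := by rw [hgw]
      _ = B v w := (hBapp v w).symm
  have hflipinv : InvariantBilin ρ B.flip := by
    intro g v w
    simpa [LinearMap.flip_apply] using hBinv g w v
  obtain ⟨c, hc⟩ := unique_form ρ hirr B B.flip hBne hBinv hflipinv
  have hcflip : ∀ v w, B w v = c * B v w := by
    intro v w
    have := LinearMap.congr_fun (LinearMap.congr_fun hc v) w
    simpa [LinearMap.flip_apply] using this
  obtain ⟨v, w, hvw⟩ : ∃ v w, B v w ≠ 0 := by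
    by_contra h
    push_neg at h
    apply hBne
    ext v w
    simpa using h v w
  have hc2 : c * c = 1 := by
    have h1 : B v w = c * B w v := hcflip w v
    have h2 : B w v = c * B v w := hcflip v w
    have hkey : B v w = c * (c * B v w) := by
      conv_lhs => rw [h1, h2]
    have h3 : (1 - c * c) * B v w = 0 := by linear_combination hkey
    rcases mul_eq_zero.mp h3 with h | h
    · exact (sub_eq_zero.mp h).symm
    · exact absurd h hvw
  rcases mul_self_eq_one_iff.mp hc2 with h | h
  · exact ⟨B, hBne, hBinv, Or.inl (fun v w => by rw [hcflip v w, h, one_mul])⟩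
  · refine ⟨B, hBne, hBinv, Or.inr (fun v w => ?_)⟩
    rw [hcflip v w, h]
    ring

/-- An irreducible rep cannot have both a nonzero symmetric and a nonzero antisymmetric
invariant bilinear form. -/
theorem not_both [FiniteDimensional ℂ V] (ρ : Representation ℂ G V)
    (hirr : RepIrreducible ρ) (B₁ B₂ : LinearMap.BilinForm ℂ V)
    (h1ne : B₁ ≠ 0) (h1inv : InvariantBilin ρ B₁) (h1sym : ∀ v w, B₁ v w = B₁ w v)
    (h2ne : B₂ ≠ 0) (h2inv : InvariantBilin ρ B₂) (h2asym : ∀ v w, B₂ v w = - B₂ w v) :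
    False := by
  obtain ⟨c, hc⟩ := unique_form ρ hirr B₁ B₂ h1ne h1inv h2inv
  obtain ⟨v, w, hvw⟩ : ∃ v w, B₂ v w ≠ 0 := by
    by_contra h
    push_neg at h
    apply h2ne
    ext v w
    simpa using h v w
  have hc2 : ∀ v w, B₂ v w = c * B₁ v w := by
    intro v w
    have := LinearMap.congr_fun (LinearMap.congr_fun hc v) w
    simpa using this
  have : B₂ v w = - B₂ v w := by
    calc B₂ v w = - B₂ w v := h2asym v w
      _ = - (c * B₁ w v) := by rw [hc2]
      _ = - (c * B₁ v w) := by rw [h1sym v w]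
      _ = - B₂ v w := by rw [hc2]
  have h2 : B₂ v w + B₂ v w = 0 := by linear_combination this
  exact hvw (add_self_eq_zero.mp h2)

end Helpers

section Key

variable {G : Type*} [Group G] [Finite G] (K : Subgroup G)
variable {V W : Type*} [AddCommGroup V] [Module ℂ V] [FiniteDimensional ℂ V]
variable [AddCommGroup W] [Module ℂ W] [FiniteDimensional ℂ W]

/-- Key lemma: the pullback along a multiplicity-one embedding of a nonzero invariant
form is nonzero. -/
theorem pullback_ne_zero (π : Representation ℂ G V) (hπirr : RepIrreducible π)
    (τ : Representation ℂ K W) (hτirr : RepIrreducible τ)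
    (eτ : W ≃ₗ[ℂ] Module.Dual ℂ W) (heτ : ∀ k x, eτ (τ k x) = τ.dual k (eτ x))
    (Φ₀ : W →ₗ[ℂ] V) (hΦ0 : Φ₀ ≠ 0)
    (hΦeq : ∀ (k : K) (x : W), Φ₀ (τ k x) = π (k : G) (Φ₀ x))
    (hmult : ∀ Φ : W →ₗ[ℂ] V, (∀ (k : K) (x : W), Φ (τ k x) = π (k : G) (Φ x)) →
      ∃ c : ℂ, Φ = c • Φ₀)
    (B : LinearMap.BilinForm ℂ V) (hB : B ≠ 0) (hBinv : InvariantBilin π B) :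
    ∃ x y : W, B (Φ₀ x) (Φ₀ y) ≠ 0 := by
  haveI : Fintype K := Fintype.ofFinite K
  -- the "adjoint" map A : V → W
  set F : V →ₗ[ℂ] Module.Dual ℂ W := B.compl₂ Φ₀ with hFdef
  have hFapp : ∀ (v : V) (x : W), F v x = B v (Φ₀ x) := fun v x => rfl
  set A : V →ₗ[ℂ] W := (eτ.symm : Module.Dual ℂ W →ₗ[ℂ] W) ∘ₗ F with hAdef
  have hAapp : ∀ v : V, A v = eτ.symm (F v) := fun v => rfl
  have hFeq : ∀ (k : K) (v : V), F (π (k : G) v) = τ.dual k (F v) := by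
    intro k v
    ext x
    have h1 : Φ₀ (τ k⁻¹ x) = π ((k : G))⁻¹ (Φ₀ x) := by
      rw [hΦeq k⁻¹ x]; norm_cast
    calc F (π (k : G) v) x = B (π (k : G) v) (Φ₀ x) := rfl
      _ = (π.dual (k : G) (B v)) (Φ₀ x) := by rw [form_equivariant π B hBinv]
      _ = B v (π ((k : G))⁻¹ (Φ₀ x)) := rfl
      _ = B v (Φ₀ (τ k⁻¹ x)) := by rw [h1]
      _ = (F v) (τ k⁻¹ x) := rfl
      _ = (τ.dual k (F v)) x := rfl
  have hAeq : ∀ (k : K) (v : V), A (π (k : G) v) = τ k (A v) := by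
    intro k v
    apply eτ.injective
    rw [hAapp, eτ.apply_symm_apply, hFeq, heτ, hAapp, eτ.apply_symm_apply]
  have hA0 : A ≠ 0 := by
    intro h
    apply hΦ0
    ext x
    refine nondeg_right π hπirr B hB hBinv (Φ₀ x) (fun v => ?_)
    have hAv : A v = 0 := by rw [h]; rfl
    have hFv : F v = 0 := by
      apply eτ.symm.injective
      rw [← hAapp, hAv, map_zero]
    have := LinearMap.congr_fun hFv x
    simpa [hFapp] using this
  have hsurj : LinearMap.range A = ⊤ := by
    have hinvr : ∀ (k : K), ∀ w ∈ LinearMap.range A, τ k w ∈ LinearMap.range A := by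
      rintro k w ⟨v, rfl⟩
      exact ⟨π (k : G) v, (hAeq k v)⟩
    rcases hτirr.2 (LinearMap.range A) hinvr with h | h
    · exact absurd (LinearMap.range_eq_bot.mp h) hA0
    · exact h
  obtain ⟨s₀, hs₀⟩ := A.exists_rightInverse_of_surjective hsurj
  have hs₀app : ∀ x : W, A (s₀ x) = x := fun x => LinearMap.congr_fun hs₀ x
  have hcard : (Fintype.card K : ℂ) ≠ 0 := Nat.cast_ne_zero.mpr Fintype.card_ne_zero
  have hττ : ∀ (k : K) (x : W), τ k (τ k⁻¹ x) = x := by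
    intro k x
    rw [← Module.End.mul_apply, ← map_mul, mul_inv_cancel, map_one, Module.End.one_apply]
  set s : W →ₗ[ℂ] V :=
    (Fintype.card K : ℂ)⁻¹ • ∑ k : K, ((π (k : G)) ∘ₗ s₀) ∘ₗ (τ k⁻¹) with hsdef
  have hsapp : ∀ x : W,
      s x = (Fintype.card K : ℂ)⁻¹ • ∑ k : K, π (k : G) (s₀ (τ k⁻¹ x)) := by
    intro x
    simp [hsdef, LinearMap.sum_apply]
  have hAs : ∀ x : W, A (s x) = x := by
    intro x
    rw [hsapp, map_smul, map_sum]
    have : ∀ k : K, A (π (k : G) (s₀ (τ k⁻¹ x))) = x := by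
      intro k
      rw [hAeq, hs₀app, hττ]
    simp only [this, Finset.sum_const, Finset.card_univ]
    rw [← Nat.cast_smul_eq_nsmul ℂ, smul_smul, inv_mul_cancel₀ hcard, one_smul]
  have hseq : ∀ (k₀ : K) (x : W), s (τ k₀ x) = π (k₀ : G) (s x) := by
    intro k₀ x
    rw [hsapp, hsapp, map_smul, map_sum]
    congr 1
    refine Fintype.sum_equiv (Equiv.mulLeft k₀⁻¹) _ _ ?_
    intro k
    show π (k : G) (s₀ (τ k⁻¹ (τ k₀ x)))
      = π (k₀ : G) (π ((k₀⁻¹ * k : K) : G) (s₀ (τ (k₀⁻¹ * k)⁻¹ x)))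
    have h1 : τ k⁻¹ (τ k₀ x) = τ (k₀⁻¹ * k)⁻¹ x := by
      rw [← Module.End.mul_apply, ← map_mul]
      congr 1
      group
    have h3 : ((k₀ : G) * ((k₀⁻¹ * k : K) : G) : G) = (k : G) := by
      push_cast
      group
    rw [h1, ← Module.End.mul_apply, ← map_mul, h3]
  obtain ⟨x₀, hx₀⟩ := hτirr.1
  obtain ⟨c, hc⟩ := hmult s hseq
  have hcne : c ≠ 0 := by
    intro h
    rw [h, zero_smul] at hc
    have : A (s x₀) = x₀ := hAs x₀
    rw [hc] at this
    simp at this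
    exact hx₀ this.symm
  have hAΦ : A (Φ₀ x₀) = c⁻¹ • x₀ := by
    have : Φ₀ = c⁻¹ • s := by
      rw [hc, smul_smul, inv_mul_cancel₀ hcne, one_smul]
    rw [this]
    simp [hAs x₀]
  have hFne : F (Φ₀ x₀) ≠ 0 := by
    intro h
    have : A (Φ₀ x₀) = 0 := by rw [hAapp, h, map_zero]
    rw [hAΦ] at this
    exact hx₀ (by simpa [smul_eq_zero, inv_eq_zero, hcne] using this)
  refine ⟨x₀, ?_⟩
  by_contra h
  push_neg at h
  apply hFne
  ext y
  simpa [hFapp] using h y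

end Key

/-- if an irreducible selfdual representation π of a finite group G
contains, with multiplicity one, an irreducible selfdual representation τ of a subgroup
K upon restriction, then π is orthogonal iff τ is orthogonal, and π is symplectic iff τ
is symplectic. -/
theorem stmt18 {G : Type*} [Group G] [Finite G] (K : Subgroup G)
    {V W : Type*} [AddCommGroup V] [Module ℂ V] [FiniteDimensional ℂ V]
    [AddCommGroup W] [Module ℂ W] [FiniteDimensional ℂ W]
    (π : Representation ℂ G V) (hπirr : RepIrreducible π) (hπsd : RepSelfdual π)
    (τ : Representation ℂ K W) (hτirr : RepIrreducible τ) (hτsd : RepSelfdual τ)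
    (hmult1 : ∃ Φ₀ : W →ₗ[ℂ] V, Φ₀ ≠ 0 ∧
      (∀ (k : K) (x : W), Φ₀ (τ k x) = π (k : G) (Φ₀ x)) ∧
      ∀ Φ : W →ₗ[ℂ] V, (∀ (k : K) (x : W), Φ (τ k x) = π (k : G) (Φ x)) →
        ∃ c : ℂ, Φ = c • Φ₀) :
    ((∃ B : LinearMap.BilinForm ℂ V, B ≠ 0 ∧ InvariantBilin π B ∧
        ∀ v w : V, B v w = B w v) ↔
      (∃ C : LinearMap.BilinForm ℂ W, C ≠ 0 ∧ InvariantBilin τ C ∧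
        ∀ x y : W, C x y = C y x)) ∧
    ((∃ B : LinearMap.BilinForm ℂ V, B ≠ 0 ∧ InvariantBilin π B ∧
        ∀ v w : V, B v w = - B w v) ↔
      (∃ C : LinearMap.BilinForm ℂ W, C ≠ 0 ∧ InvariantBilin τ C ∧
        ∀ x y : W, C x y = - C y x)) := by
  obtain ⟨Φ₀, hΦ0, hΦeq, hmult⟩ := hmult1
  obtain ⟨eτ, heτ⟩ := hτsd
  -- pullback machinery
  have hpull_app : ∀ (B : LinearMap.BilinForm ℂ V) (x y : W),
      (B.compl₁₂ Φ₀ Φ₀) x y = B (Φ₀ x) (Φ₀ y) := fun B x y => rfl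
  have hpull_inv : ∀ B : LinearMap.BilinForm ℂ V, InvariantBilin π B →
      InvariantBilin τ (B.compl₁₂ Φ₀ Φ₀) := by
    intro B hB k x y
    rw [hpull_app, hpull_app, hΦeq, hΦeq, hB]
  have hpull_ne : ∀ B : LinearMap.BilinForm ℂ V, B ≠ 0 → InvariantBilin π B →
      (B.compl₁₂ Φ₀ Φ₀ : LinearMap.BilinForm ℂ W) ≠ 0 := by
    intro B hBne hBinv h0
    obtain ⟨x, y, hxy⟩ := pullback_ne_zero K π hπirr τ hτirr eτ heτ Φ₀ hΦ0 hΦeq hmult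
      B hBne hBinv
    apply hxy
    have := LinearMap.congr_fun (LinearMap.congr_fun h0 x) y
    simpa [hpull_app] using this
  -- the sign form on V
  obtain ⟨B₀, hB₀ne, hB₀inv, hB₀sign⟩ := exists_sign_form π hπirr hπsd
  set C₀ : LinearMap.BilinForm ℂ W := B₀.compl₁₂ Φ₀ Φ₀ with hC₀def
  have hC₀ne : C₀ ≠ 0 := hpull_ne B₀ hB₀ne hB₀inv
  have hC₀inv : InvariantBilin τ C₀ := hpull_inv B₀ hB₀inv
  constructor
  · constructor
    · rintro ⟨B, hBne, hBinv, hBsym⟩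
      refine ⟨B.compl₁₂ Φ₀ Φ₀, hpull_ne B hBne hBinv, hpull_inv B hBinv, fun x y => ?_⟩
      rw [hpull_app, hpull_app, hBsym]
    · rintro ⟨C, hCne, hCinv, hCsym⟩
      rcases hB₀sign with hsym | hasym
      · exact ⟨B₀, hB₀ne, hB₀inv, hsym⟩
      · exfalso
        have hC₀asym : ∀ x y, C₀ x y = - C₀ y x := by
          intro x y
          rw [hC₀def, hpull_app, hpull_app, hasym]
        exact not_both τ hτirr C C₀ hCne hCinv hCsym hC₀ne hC₀inv hC₀asym
  · constructor
    · rintro ⟨B, hBne, hBinv, hBasym⟩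
      refine ⟨B.compl₁₂ Φ₀ Φ₀, hpull_ne B hBne hBinv, hpull_inv B hBinv, fun x y => ?_⟩
      rw [hpull_app, hpull_app, hBasym]
    · rintro ⟨C, hCne, hCinv, hCasym⟩
      rcases hB₀sign with hsym | hasym
      · exfalso
        have hC₀sym : ∀ x y, C₀ x y = C₀ y x := by
          intro x y
          rw [hC₀def, hpull_app, hpull_app, hsym]
        exact not_both τ hτirr C₀ C hC₀ne hC₀inv hC₀sym hCne hCinv hCasym
      · exact ⟨B₀, hB₀ne, hB₀inv, hasym⟩
end
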